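/- Let N be a positive integer and let γ ∈ (ℂˣ)^N be such that for every nonzero vector v ∈ ℤ^N, the number ∏_i γ_i^{v_i} (integer exponents) is not a root of unity. Then the cyclic semigroup generated by γ is Zariski dense in the torus: every polynomial f in N variables over ℂ satisfying f(γ₁^n, …, γ_N^n) = 0 for all natural numbers n is the zero polynomial. -/

import Mathlib

/-- If no nontrivial integer character of the torus sends `γ ∈ (ℂˣ)^N` to a root of
unity, then the cyclic semigroup generated by `γ` is Zariski dense. -/
theorem stmt_13 (N : ℕ) (hN : 0 < N) (γ : Fin N → ℂˣ)
    (hγ : ∀ v : Fin N → ℤ, v ≠ 0 → ¬∃ k : ℕ, 0 < k ∧ (∏ i, γ i ^ v i) ^ k = 1)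
    (f : MvPolynomial (Fin N) ℂ)
    (hf : ∀ n : ℕ, MvPolynomial.eval (fun i => (γ i : ℂ) ^ n) f = 0) :
    f = 0 := by
  classical
  set z : (Fin N →₀ ℕ) → ℂˣ := fun d => ∏ i, γ i ^ (d i : ℤ) with hzdef
  -- injectivity of d ↦ z d
  have hzinj : Function.Injective z := by
    intro d e hde
    by_contra hne
    have hv : (fun i => (d i : ℤ) - e i) ≠ 0 := by
      intro h
      apply hne
      ext i
      have := congrFun h i
      simpa [sub_eq_zero] using this
    refine hγ _ hv ⟨1, one_pos, ?_⟩
    rw [pow_one]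
    have : ∏ i, γ i ^ ((d i : ℤ) - e i) = z d / z e := by
      rw [hzdef]
      simp only [zpow_sub]
      rw [Finset.prod_mul_distrib, Finset.prod_inv_distrib, div_eq_mul_inv]
    rw [this, hde]
    exact div_self' _
  -- eval as a sum over support
  have hsum : ∀ n : ℕ, ∑ d ∈ f.support, f.coeff d * ((z d : ℂ)) ^ n = 0 := by
    intro n
    have h := hf n
    rw [MvPolynomial.eval_eq'] at h
    rw [← h]
    refine Finset.sum_congr rfl fun d _ => ?_
    congr 1
    have : ((z d : ℂ)) = ∏ i, (γ i : ℂ) ^ (d i) := by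
      rw [hzdef]
      push_cast
      simp [zpow_natCast]
    rw [this, ← Finset.prod_pow]
    refine Finset.prod_congr rfl fun i _ => ?_
    rw [← pow_mul, ← pow_mul, Nat.mul_comm]
  -- linear independence of characters n ↦ (z d)^n
  have hli : LinearIndependent ℂ
      (fun d : f.support => ⇑(powersHom ℂ ((z d : ℂ)))) := by
    refine (linearIndependent_monoidHom (Multiplicative ℕ) ℂ).comp _ ?_
    intro d e h
    have : (z (d : Fin N →₀ ℕ) : ℂ) = (z (e : Fin N →₀ ℕ) : ℂ) :=
      (powersHom ℂ).injective h
    exact Subtype.ext (hzinj (Units.ext this))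
  have hcoeff : ∀ d ∈ f.support, f.coeff d = 0 := by
    intro d hd
    have h0 : ∑ d : f.support, f.coeff d •
        (fun m : Multiplicative ℕ => (z (d : Fin N →₀ ℕ) : ℂ) ^ m.toAdd) = 0 := by
      funext m
      have := hsum m.toAdd
      simpa [Finset.sum_apply, ← Finset.sum_attach f.support] using
        (Finset.sum_attach f.support
          (fun d => f.coeff d * ((z d : ℂ)) ^ m.toAdd)).trans this
    have h0' : ∑ d : f.support, f.coeff d • ⇑(powersHom ℂ ((z (d : Fin N →₀ ℕ) : ℂ))) = 0 := by
      convert h0 using 2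
      rfl
    exact (Fintype.linearIndependent_iff.1 hli) (fun d => f.coeff d) h0' ⟨d, hd⟩
  have : f.support = ∅ := by
    by_contra h
    obtain ⟨d, hd⟩ := Finset.nonempty_iff_ne_empty.2 h
    exact (MvPolynomial.mem_support_iff.1 hd) (hcoeff d hd)
  exact (MvPolynomial.support_eq_empty.1 this)
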